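/- arXiv:1912.11225 — 7 statements merged into one kernel-verified Lean document; each statement's English description precedes it below -/
import Mathlib

section
/- Let H be the group of 3×3 upper unitriangular matrices over F_p[t] whose (1,2) and (2,3) entries are polynomials of degree at most 1 and whose (1,3) entry has degree at most 2. Let H1 be the subgroup with (2,3) and (1,3) entries zero, and H2 the subgroup with (1,2) and (1,3) entries zero. Then the cosets M1(ℓ1,Q1)·H1 and M2(ℓ2,Q2)·H2 intersect nontrivially if and only if ℓ1·ℓ2 = Q1 − Q2, where M1(ℓ,Q) is the unitriangular matrix with (2,3) entry ℓ and (1,3) entry Q (and (1,2) entry 0), and M2(ℓ,Q) has (1,2) entry ℓ and (1,3) entry Q (and (2,3) entry 0). -/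
open Polynomial

/-- `M1(ℓ,Q)`: upper unitriangular matrix with `(2,3)` entry `ℓ`, `(1,3)` entry `Q`. -/
noncomputable def M1 {p : ℕ} (ℓ Q : Polynomial (ZMod p)) : Matrix (Fin 3) (Fin 3) (Polynomial (ZMod p)) :=
  !![1, 0, Q; 0, 1, ℓ; 0, 0, 1]

/-- `M2(ℓ,Q)`: upper unitriangular matrix with `(1,2)` entry `ℓ`, `(1,3)` entry `Q`. -/
noncomputable def M2 {p : ℕ} (ℓ Q : Polynomial (ZMod p)) : Matrix (Fin 3) (Fin 3) (Polynomial (ZMod p)) :=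
  !![1, ℓ, Q; 0, 1, 0; 0, 0, 1]

/-- `H1`: the subgroup of unitriangular matrices whose only possibly nonzero off-diagonal entry
is a linear polynomial in position `(1,2)`. -/
def H1 (p : ℕ) : Set (Matrix (Fin 3) (Fin 3) (Polynomial (ZMod p))) :=
  {A | ∃ ℓ : Polynomial (ZMod p), ℓ.degree ≤ 1 ∧ A = !![1, ℓ, 0; 0, 1, 0; 0, 0, 1]}

/-- `H2`: the subgroup of unitriangular matrices whose only possibly nonzero off-diagonal entry
is a linear polynomial in position `(2,3)`. -/
def H2 (p : ℕ) : Set (Matrix (Fin 3) (Fin 3) (Polynomial (ZMod p))) :=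
  {A | ∃ ℓ : Polynomial (ZMod p), ℓ.degree ≤ 1 ∧ A = !![1, 0, 0; 0, 1, ℓ; 0, 0, 1]}

/-- The cosets `M1(ℓ1,Q1)·H1` and `M2(ℓ2,Q2)·H2` intersect nontrivially iff
`ℓ1·ℓ2 = Q1 − Q2`. -/
theorem coset_M1_H1_inter_M2_H2 {p : ℕ} [Fact p.Prime]
    (ℓ1 ℓ2 Q1 Q2 : Polynomial (ZMod p))
    (hl1 : ℓ1.degree ≤ 1) (hl2 : ℓ2.degree ≤ 1)
    (hq1 : Q1.degree ≤ 2) (hq2 : Q2.degree ≤ 2) :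
    (((M1 ℓ1 Q1 * ·) '' H1 p) ∩ ((M2 ℓ2 Q2 * ·) '' H2 p)).Nonempty ↔
      ℓ1 * ℓ2 = Q1 - Q2 := by
  constructor
  · rintro ⟨X, ⟨_, ⟨a, ha, rfl⟩, h1⟩, ⟨_, ⟨b, hb, rfl⟩, h2⟩⟩
    have h := h1.trans h2.symm
    simp only [M1, M2, Matrix.mul_fin_three] at h
    have e12 := congrFun (congrFun h 0) 1
    have e13 := congrFun (congrFun h 0) 2
    have e23 := congrFun (congrFun h 1) 2
    simp [Matrix.cons_val_zero, Matrix.cons_val_one] at e12 e13 e23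
    subst e12 e23
    linear_combination -e13
  · intro h
    refine ⟨M1 ℓ1 Q1 * !![1, ℓ2, 0; 0, 1, 0; 0, 0, 1], ⟨_, ⟨ℓ2, hl2, rfl⟩, rfl⟩,
      !![1, 0, 0; 0, 1, ℓ1; 0, 0, 1], ⟨ℓ1, hl1, rfl⟩, ?_⟩
    simp only [M1, M2, Matrix.mul_fin_three]
    apply Matrix.ext; intro i j
    fin_cases i <;> fin_cases j <;> simp <;> linear_combination h
end

section
/- Let q be a prime power. The bipartite graph B_q on F_q² ⊔ F_q² with (a,b) ~ (c,d) iff ac = b+d is q-regular, and the second largest eigenvalue of its normalized adjacency operator is at most 1/√q. -/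
set_option linter.unusedSectionVars false

section
variable {F : Type*} [Field F] [Fintype F] [DecidableEq F]

lemma ite_sum1 (t s : F) (g : F → ℝ) :
    ∑ b, (if t = s + b then (1:ℝ) else 0) * g b = g (t - s) := by
  rw [Finset.sum_eq_single (t - s)]
  · simp
  · intro b _ hb
    have : ¬ (t = s + b) := by
      intro h; exact hb (by rw [h]; ring)
    simp [this]
  · simp

lemma ite_sum2 (t s : F) (g : F → ℝ) :
    ∑ b, (if t = b + s then (1:ℝ) else 0) * g b = g (t - s) := by
  have : ∀ b : F, (if t = b + s then (1:ℝ) else 0) = (if t = s + b then (1:ℝ) else 0) := by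
    intro b; rw [add_comm]
  simp only [this]; exact ite_sum1 t s g

lemma sum_reindex_sub (t : F) (g : F → ℝ) (f : F → ℝ) (h : ∀ b, f b = g (t - b)) :
    ∑ b, f b = ∑ b, g b :=
  Fintype.sum_equiv (Equiv.subLeft t) f g h

lemma sum_reindex_affine (s t : F) (hs : s ≠ 0) (g : F → ℝ) (f : F → ℝ)
    (h : ∀ c, f c = g (s * c + t)) : ∑ c, f c = ∑ c, g c :=
  Fintype.sum_equiv ((Equiv.mulLeft₀ s hs).trans (Equiv.addRight t)) f g h

lemma swap_pair (f g : F × F → ℝ) :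
    ∑ p : F × F, ∑ c, f p * g (c, p.1 * c - p.2) =
      ∑ p : F × F, g p * ∑ a, f (a, a * p.1 - p.2) := by
  rw [Fintype.sum_prod_type]
  have step1 : ∀ a : F, ∑ b, ∑ c, f (a, b) * g (c, a * c - b)
      = ∑ c, ∑ d, f (a, a * c - d) * g (c, d) := by
    intro a
    refine Finset.sum_comm.trans (Finset.sum_congr rfl fun c _ => ?_)
    refine sum_reindex_sub (a * c) (fun d => f (a, a * c - d) * g (c, d))
      (fun b => f (a, b) * g (c, a * c - b)) ?_
    intro b
    have h1 : a * c - (a * c - b) = b := by ring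
    rw [h1]
  have step2 : ∀ a : F, ∑ c, ∑ d, f (a, a * c - d) * g (c, d)
      = ∑ p : F × F, f (a, a * p.1 - p.2) * g p := by
    intro a
    exact (Fintype.sum_prod_type (f := fun p : F × F => f (a, a * p.1 - p.2) * g p)).symm
  simp only [step1, step2]
  refine Finset.sum_comm.trans (Finset.sum_congr rfl fun p _ => ?_)
  rw [← Finset.sum_mul, mul_comm]

lemma key_bound (w : F × F → ℝ) (hw : ∑ p, w p = 0) :
    ∑ p : F × F, (∑ a, w (a, a * p.1 - p.2)) ^ 2 ≤
      (Fintype.card F : ℝ) * ∑ p, (w p) ^ 2 := by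
  set Q : ℝ := (Fintype.card F : ℝ) with hQ
  set s : F → ℝ := fun a => ∑ b, w (a, b) with hsdef
  have hs : ∑ a, s a = 0 := by
    rw [Fintype.sum_prod_type] at hw; exact hw
  have e1 : ∀ p : F × F, (∑ a, w (a, a * p.1 - p.2)) ^ 2 =
      ∑ r : F × F, w (r.1, r.1 * p.1 - p.2) * w (r.2, r.2 * p.1 - p.2) := by
    intro p
    rw [sq, Finset.sum_mul_sum]
    exact (Fintype.sum_prod_type
      (f := fun r : F × F => w (r.1, r.1 * p.1 - p.2) * w (r.2, r.2 * p.1 - p.2))).symm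
  have diag : ∀ a : F, (∑ p : F × F, w (a, a * p.1 - p.2) * w (a, a * p.1 - p.2))
      = Q * ∑ b, w (a, b) ^ 2 := by
    intro a
    rw [Fintype.sum_prod_type]
    have inner : ∀ c : F, ∑ d, w (a, a * c - d) * w (a, a * c - d) = ∑ d, w (a, d) ^ 2 := by
      intro c
      refine sum_reindex_sub (a * c) (fun d => w (a, d) ^ 2)
        (fun d => w (a, a * c - d) * w (a, a * c - d)) ?_
      intro d; rw [sq]
    simp only [inner]
    rw [Finset.sum_const, Finset.card_univ, nsmul_eq_mul, hQ]
  have off : ∀ a a' : F, a ≠ a' →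
      (∑ p : F × F, w (a, a * p.1 - p.2) * w (a', a' * p.1 - p.2)) = s a * s a' := by
    intro a a' hne
    rw [Fintype.sum_prod_type]
    have inner : ∀ c : F, ∑ d, w (a, a * c - d) * w (a', a' * c - d)
        = ∑ d, w (a, d) * w (a', (a' - a) * c + d) := by
      intro c
      refine sum_reindex_sub (a * c) (fun d => w (a, d) * w (a', (a' - a) * c + d))
        (fun d => w (a, a * c - d) * w (a', a' * c - d)) ?_
      intro d
      have h2 : (a' - a) * c + (a * c - d) = a' * c - d := by ring
      rw [h2]
    simp only [inner]
    rw [Finset.sum_comm]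
    have inner2 : ∀ d : F, ∑ c, w (a, d) * w (a', (a' - a) * c + d) = w (a, d) * s a' := by
      intro d
      rw [← Finset.mul_sum]
      congr 1
      refine sum_reindex_affine (a' - a) d (sub_ne_zero_of_ne hne.symm)
        (fun c => w (a', c)) (fun c => w (a', (a' - a) * c + d)) (fun c => rfl)
    simp only [inner2]
    rw [← Finset.sum_mul]
  have split : ∀ a a' : F, (∑ p : F × F, w (a, a * p.1 - p.2) * w (a', a' * p.1 - p.2))
      = s a * s a' + (if a' = a then Q * (∑ b, w (a, b) ^ 2) - s a * s a else 0) := by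
    intro a a'
    by_cases h : a' = a
    · subst h; rw [diag]; simp
    · rw [off a a' (Ne.symm h)]; simp [h]
  calc ∑ p : F × F, (∑ a, w (a, a * p.1 - p.2)) ^ 2
      = ∑ p : F × F, ∑ r : F × F, w (r.1, r.1 * p.1 - p.2) * w (r.2, r.2 * p.1 - p.2) := by
        simp only [e1]
    _ = ∑ r : F × F, ∑ p : F × F, w (r.1, r.1 * p.1 - p.2) * w (r.2, r.2 * p.1 - p.2) :=
        Finset.sum_comm
    _ = ∑ a : F, ∑ a' : F,
        (s a * s a' + (if a' = a then Q * (∑ b, w (a, b) ^ 2) - s a * s a else 0)) := by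
        rw [Fintype.sum_prod_type]
        exact Finset.sum_congr rfl fun a _ => Finset.sum_congr rfl fun a' _ => split a a'
    _ = ∑ a : F, (s a * (∑ a', s a') + (Q * (∑ b, w (a, b) ^ 2) - s a * s a)) := by
        refine Finset.sum_congr rfl fun a _ => ?_
        rw [Finset.sum_add_distrib, ← Finset.mul_sum]
        congr 1
        simp
    _ = Q * (∑ p : F × F, w p ^ 2) - ∑ a, s a * s a := by
        simp only [hs, mul_zero, zero_add]
        rw [Finset.sum_sub_distrib, ← Finset.mul_sum]
        congr 2
        exact (Fintype.sum_prod_type (f := fun p : F × F => w p ^ 2)).symm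
    _ ≤ Q * ∑ p, (w p) ^ 2 := by
        have : (0:ℝ) ≤ ∑ a, s a * s a :=
          Finset.sum_nonneg fun a _ => mul_self_nonneg _
        linarith

end


/-- The (0/1-valued) adjacency matrix of the bipartite points–lines graph `B_q` on
`F_q² ⊔ F_q²`: the left vertex `(a,b)` is adjacent to the right vertex `(c,d)` iff
`a·c = b + d`. -/
def pointsLinesAdj {F : Type*} [Field F] [DecidableEq F] :
    ((F × F) ⊕ (F × F)) → ((F × F) ⊕ (F × F)) → ℝ
  | Sum.inl (a, b), Sum.inr (c, d) => if a * c = b + d then 1 else 0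
  | Sum.inr (c, d), Sum.inl (a, b) => if a * c = b + d then 1 else 0
  | _, _ => 0



section
variable {F : Type*} [Field F] [Fintype F] [DecidableEq F]

lemma adj_ll (p p' : F × F) : pointsLinesAdj (Sum.inl p) (Sum.inl p') = 0 := by
  obtain ⟨a, b⟩ := p; obtain ⟨c, d⟩ := p'; rfl

lemma adj_rr (p p' : F × F) : pointsLinesAdj (Sum.inr p) (Sum.inr p') = 0 := by
  obtain ⟨a, b⟩ := p; obtain ⟨c, d⟩ := p'; rfl

lemma adj_lr (p p' : F × F) : pointsLinesAdj (Sum.inl p) (Sum.inr p')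
    = if p.1 * p'.1 = p.2 + p'.2 then 1 else 0 := by
  obtain ⟨a, b⟩ := p; obtain ⟨c, d⟩ := p'; rfl

lemma adj_rl (p p' : F × F) : pointsLinesAdj (Sum.inr p) (Sum.inl p')
    = if p'.1 * p.1 = p'.2 + p.2 then 1 else 0 := by
  obtain ⟨a, b⟩ := p; obtain ⟨c, d⟩ := p'; rfl

lemma inner_l (a b : F) (g : F × F → ℝ) :
    ∑ p' : F × F, (if a * p'.1 = b + p'.2 then (1:ℝ) else 0) * g p' =
      ∑ c, g (c, a * c - b) := by
  rw [Fintype.sum_prod_type]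
  refine Finset.sum_congr rfl fun c _ => ?_
  exact ite_sum1 (a * c) b (fun d => g (c, d))

lemma inner_r (c d : F) (g : F × F → ℝ) :
    ∑ p : F × F, (if p.1 * c = p.2 + d then (1:ℝ) else 0) * g p =
      ∑ a, g (a, a * c - d) := by
  rw [Fintype.sum_prod_type]
  refine Finset.sum_congr rfl fun a _ => ?_
  exact ite_sum2 (a * c) d (fun b => g (a, b))

end

/-- The graph `B_q` is `q`-regular, and the second largest eigenvalue of its normalized
adjacency operator is at most `1/√q`: for every vector `x` orthogonal to the constant vector,
`⟨x, Ax⟩ ≤ (1/√q)·⟨x, x⟩` where `A` is the adjacency matrix divided by the degree `q`. -/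
theorem pointsLines_regular_and_spectral_gap {F : Type*} [Field F] [Fintype F] [DecidableEq F] :
    (∀ v : (F × F) ⊕ (F × F), ∑ w, pointsLinesAdj v w = (Fintype.card F : ℝ)) ∧
    (∀ x : ((F × F) ⊕ (F × F)) → ℝ, (∑ v, x v = 0) →
      ∑ v, x v * ((∑ w, pointsLinesAdj v w * x w) / (Fintype.card F : ℝ)) ≤
        (1 / Real.sqrt (Fintype.card F)) * ∑ v, (x v) ^ 2) := by
  have hQ0 : (0:ℝ) < (Fintype.card F : ℝ) := by
    exact_mod_cast Fintype.card_pos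
  constructor
  · intro v
    rcases v with p | p
    · rw [Fintype.sum_sum_type]
      simp only [adj_ll, adj_lr, Finset.sum_const_zero, zero_add]
      calc ∑ p' : F × F, (if p.1 * p'.1 = p.2 + p'.2 then (1:ℝ) else 0)
          = ∑ p' : F × F, (if p.1 * p'.1 = p.2 + p'.2 then (1:ℝ) else 0) * 1 := by
            simp
        _ = ∑ _c : F, (1:ℝ) := inner_l p.1 p.2 (fun _ => 1)
        _ = (Fintype.card F : ℝ) := by simp
    · rw [Fintype.sum_sum_type]
      simp only [adj_rr, adj_rl, Finset.sum_const_zero, add_zero]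
      calc ∑ p' : F × F, (if p'.1 * p.1 = p'.2 + p.2 then (1:ℝ) else 0)
          = ∑ p' : F × F, (if p'.1 * p.1 = p'.2 + p.2 then (1:ℝ) else 0) * 1 := by
            simp
        _ = ∑ _a : F, (1:ℝ) := inner_r p.1 p.2 (fun _ => 1)
        _ = (Fintype.card F : ℝ) := by simp
  · intro x hx
    set Q : ℝ := (Fintype.card F : ℝ) with hQdef
    set r : ℝ := Real.sqrt Q with hrdef
    have hr0 : 0 < r := Real.sqrt_pos.mpr hQ0
    have hr2 : r ^ 2 = Q := Real.sq_sqrt hQ0.le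
    rw [Fintype.sum_sum_type] at hx
    set S : ℝ := ∑ p : F × F, x (Sum.inl p) with hS
    set T : ℝ := ∑ p : F × F, x (Sum.inr p) with hT
    have hST : S + T = 0 := hx
    set m : ℝ := S / Q ^ 2 with hm
    set n : ℝ := T / Q ^ 2 with hn
    set y' : F × F → ℝ := fun p => x (Sum.inl p) - m with hy'
    set z' : F × F → ℝ := fun p => x (Sum.inr p) - n with hz'
    have hy'sum : ∑ p, y' p = 0 := by
      rw [hy', Finset.sum_sub_distrib, Finset.sum_const, Finset.card_univ,
        Fintype.card_prod, nsmul_eq_mul, ← hS, hm]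
      push_cast
      field_simp
      rw [← hQdef]
      ring
    have hz'sum : ∑ p, z' p = 0 := by
      rw [hz', Finset.sum_sub_distrib, Finset.sum_const, Finset.card_univ,
        Fintype.card_prod, nsmul_eq_mul, ← hT, hn]
      push_cast
      field_simp
      rw [← hQdef]
      ring
    -- the bilinear sum
    set B : ℝ := ∑ p : F × F, ∑ c : F, x (Sum.inl p) * x (Sum.inr (c, p.1 * c - p.2)) with hB
    set B' : ℝ := ∑ p : F × F, ∑ c : F, y' p * z' (c, p.1 * c - p.2) with hB'
    set u : F × F → ℝ := fun p => ∑ a, y' (a, a * p.1 - p.2) with hu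
    -- inner sums of the quadratic form
    have hinl : ∀ p : F × F, ∑ w, pointsLinesAdj (Sum.inl p) w * x w
        = ∑ c, x (Sum.inr (c, p.1 * c - p.2)) := by
      intro p
      rw [Fintype.sum_sum_type]
      simp only [adj_ll, adj_lr, zero_mul, Finset.sum_const_zero, zero_add]
      exact inner_l p.1 p.2 (fun q => x (Sum.inr q))
    have hinr : ∀ p : F × F, ∑ w, pointsLinesAdj (Sum.inr p) w * x w
        = ∑ a, x (Sum.inl (a, a * p.1 - p.2)) := by
      intro p
      rw [Fintype.sum_sum_type]
      simp only [adj_rr, adj_rl, zero_mul, Finset.sum_const_zero, add_zero]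
      exact inner_r p.1 p.2 (fun q => x (Sum.inl q))
    have sp := swap_pair (fun p : F × F => x (Sum.inl p)) (fun p : F × F => x (Sum.inr p))
    have hLHS : ∑ v, x v * ((∑ w, pointsLinesAdj v w * x w) / Q) = (B + B) / Q := by
      rw [Fintype.sum_sum_type]
      simp only [hinl, hinr]
      simp only [← mul_div_assoc]
      rw [← Finset.sum_div, ← Finset.sum_div, ← add_div]
      have e1 : ∑ p : F × F, x (Sum.inl p) * ∑ c, x (Sum.inr (c, p.1 * c - p.2)) = B := by
        rw [hB]
        exact Finset.sum_congr rfl fun p _ => Finset.mul_sum _ _ _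
      have e2 : ∑ p : F × F, x (Sum.inr p) * ∑ a, x (Sum.inl (a, a * p.1 - p.2)) = B := by
        rw [hB, sp]
      rw [e1, e2]
    have hRHS : ∑ v, x v ^ 2 = ∑ p : F × F, x (Sum.inl p) ^ 2 + ∑ p : F × F, x (Sum.inr p) ^ 2 :=
      Fintype.sum_sum_type _
    -- decompose B
    have hBdec : B = B' + m * n * (Q ^ 2 * Q) := by
      have expand : ∀ (p : F × F) (c : F), x (Sum.inl p) * x (Sum.inr (c, p.1 * c - p.2))
          = y' p * z' (c, p.1 * c - p.2) + n * y' p + m * z' (c, p.1 * c - p.2) + m * n := by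
        intro p c; simp only [hy', hz']; ring
      have t1 : ∑ p : F × F, ∑ _c : F, n * y' p = 0 := by
        simp only [Finset.sum_const, Finset.card_univ, nsmul_eq_mul]
        rw [← Finset.mul_sum]
        have : ∑ p : F × F, n * y' p = n * ∑ p, y' p := (Finset.mul_sum _ _ _).symm
        rw [this, hy'sum, mul_zero, mul_zero]
      have t2 : ∑ p : F × F, ∑ c : F, m * z' (c, p.1 * c - p.2) = 0 := by
        have sp2 := swap_pair (fun _ : F × F => (1:ℝ)) z'
        simp only [one_mul] at sp2
        have hstep : ∑ p : F × F, ∑ c, m * z' (c, p.1 * c - p.2)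
            = m * ∑ p : F × F, ∑ c, z' (c, p.1 * c - p.2) := by
          rw [Finset.mul_sum]
          exact Finset.sum_congr rfl fun p _ => (Finset.mul_sum _ _ _).symm
        rw [hstep, sp2]
        simp only [Finset.sum_const, Finset.card_univ, nsmul_eq_mul, mul_one]
        rw [← Finset.sum_mul, hz'sum, zero_mul, mul_zero]
      have t3 : ∑ _p : F × F, ∑ _c : F, (m * n : ℝ) = m * n * (Q ^ 2 * Q) := by
        simp only [Finset.sum_const, Finset.card_univ, nsmul_eq_mul, Fintype.card_prod]
        push_cast
        rw [← hQdef]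
        ring
      rw [hB, hB']
      simp only [expand]
      simp only [Finset.sum_add_distrib]
      rw [t1, t2, t3]
      ring
    have spB' := swap_pair y' z'
    have humn : m * n ≤ 0 := by
      have hTn : T = -S := by linarith
      have : m * n = -((S / Q ^ 2) ^ 2) := by rw [hm, hn, hTn]; ring
      rw [this]
      exact neg_nonpos.mpr (sq_nonneg _)
    have hptw : ∀ p : F × F, z' p * u p ≤ (u p) ^ 2 / (2 * r) + r / 2 * (z' p) ^ 2 := by
      intro p
      have heq : (u p) ^ 2 / (2 * r) + r / 2 * (z' p) ^ 2 - z' p * u p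
          = (u p - r * z' p) ^ 2 / (2 * r) := by
        field_simp
        ring
      have h2 : (0:ℝ) ≤ (u p - r * z' p) ^ 2 / (2 * r) :=
        div_nonneg (sq_nonneg _) (by linarith)
      linarith
    have hB'le : B' ≤ (∑ p, (u p) ^ 2) / (2 * r) + r / 2 * ∑ p, (z' p) ^ 2 := by
      rw [hB', spB']
      calc ∑ p : F × F, z' p * u p
          ≤ ∑ p : F × F, ((u p) ^ 2 / (2 * r) + r / 2 * (z' p) ^ 2) :=
            Finset.sum_le_sum fun p _ => hptw p
        _ = (∑ p, (u p) ^ 2) / (2 * r) + r / 2 * ∑ p, (z' p) ^ 2 := by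
            rw [Finset.sum_add_distrib, ← Finset.sum_div, ← Finset.mul_sum]
    have hukey : ∑ p, (u p) ^ 2 ≤ Q * ∑ p, (y' p) ^ 2 := key_bound y' hy'sum
    have hyy : ∑ p, (y' p) ^ 2 ≤ ∑ p : F × F, x (Sum.inl p) ^ 2 := by
      have expand : ∀ p : F × F, x (Sum.inl p) ^ 2 = y' p ^ 2 + 2 * m * y' p + m ^ 2 := by
        intro p; simp only [hy']; ring
      have hsum : ∑ p : F × F, x (Sum.inl p) ^ 2
          = ∑ p, y' p ^ 2 + 2 * m * (∑ p, y' p) + (Fintype.card (F × F) : ℝ) * m ^ 2 := by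
        simp only [expand]
        rw [Finset.sum_add_distrib, Finset.sum_add_distrib, ← Finset.mul_sum,
          Finset.sum_const, Finset.card_univ, nsmul_eq_mul]
      rw [hy'sum, mul_zero, add_zero] at hsum
      have : (0:ℝ) ≤ (Fintype.card (F × F) : ℝ) * m ^ 2 := by positivity
      linarith
    have hzz : ∑ p, (z' p) ^ 2 ≤ ∑ p : F × F, x (Sum.inr p) ^ 2 := by
      have expand : ∀ p : F × F, x (Sum.inr p) ^ 2 = z' p ^ 2 + 2 * n * z' p + n ^ 2 := by
        intro p; simp only [hz']; ring
      have hsum : ∑ p : F × F, x (Sum.inr p) ^ 2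
          = ∑ p, z' p ^ 2 + 2 * n * (∑ p, z' p) + (Fintype.card (F × F) : ℝ) * n ^ 2 := by
        simp only [expand]
        rw [Finset.sum_add_distrib, Finset.sum_add_distrib, ← Finset.mul_sum,
          Finset.sum_const, Finset.card_univ, nsmul_eq_mul]
      rw [hz'sum, mul_zero, add_zero] at hsum
      have : (0:ℝ) ≤ (Fintype.card (F × F) : ℝ) * n ^ 2 := by positivity
      linarith
    -- assemble
    rw [hLHS, hRHS]
    have h1 : (∑ p, (u p) ^ 2) / (2 * r) ≤ r / 2 * ∑ p, (y' p) ^ 2 := by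
      have h2r : (0:ℝ) < 2 * r := by linarith
      have e : Q * (∑ p, (y' p) ^ 2) / (2 * r) = r / 2 * ∑ p, (y' p) ^ 2 := by
        rw [← hr2]
        field_simp
      calc (∑ p, (u p) ^ 2) / (2 * r) ≤ Q * (∑ p, (y' p) ^ 2) / (2 * r) := by
            gcongr
        _ = r / 2 * ∑ p, (y' p) ^ 2 := e
    have hBle : B ≤ r / 2 * (∑ p, (y' p) ^ 2 + ∑ p, (z' p) ^ 2) := by
      have hc : m * n * (Q ^ 2 * Q) ≤ 0 :=
        mul_nonpos_of_nonpos_of_nonneg humn (by positivity)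
      rw [hBdec]
      nlinarith [hB'le, h1]
    have step1 : (B + B) / Q ≤ (r * (∑ p, (y' p) ^ 2 + ∑ p, (z' p) ^ 2)) / Q := by
      have : B + B ≤ r * (∑ p, (y' p) ^ 2 + ∑ p, (z' p) ^ 2) := by linarith
      gcongr
    have step2 : (r * (∑ p, (y' p) ^ 2 + ∑ p, (z' p) ^ 2)) / Q
        = (1 / r) * (∑ p, (y' p) ^ 2 + ∑ p, (z' p) ^ 2) := by
      rw [← hr2]
      field_simp
    have step3 : (1 / r) * (∑ p, (y' p) ^ 2 + ∑ p, (z' p) ^ 2)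
        ≤ (1 / r) * (∑ p : F × F, x (Sum.inl p) ^ 2 + ∑ p : F × F, x (Sum.inr p) ^ 2) := by
      have h0 : (0:ℝ) ≤ 1 / r := by positivity
      exact mul_le_mul_of_nonneg_left (add_le_add hyy hzz) h0
    calc (B + B) / Q ≤ (1 / r) * (∑ p, (y' p) ^ 2 + ∑ p, (z' p) ^ 2) := by
          rw [← step2]; exact step1
      _ ≤ _ := step3
end

section
/- Let A be a self-adjoint operator (with respect to a given inner product) on functions on the vertices of a finite connected weighted graph, given by the random-walk averaging operator Af(v) = E_{u~v}[f(u)]. Suppose for every vertex v, the local averaging operator A_v on the link of v satisfies ⟨A_v f, f⟩ ≤ λ⟨f,f⟩ for all f orthogonal to constants on the link, where λ < 1/2. Then for every g orthogonal to constants on the whole graph, ⟨Ag, g⟩ ≤ (λ/(1−λ))·⟨g,g⟩. -/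
open Finset

/-- The weight of the (ordered) edge `(v,u)` in a weighted 2-dimensional simplicial complex
whose balanced weights are given by a probability distribution `m` on ordered triangles. -/
noncomputable def edgeWt {V : Type*} [Fintype V] (m : V → V → V → ℝ) (v u : V) : ℝ :=
  ∑ w, m v u w

/-- The weight of the vertex `v`. -/
noncomputable def vertWt {V : Type*} [Fintype V] (m : V → V → V → ℝ) (v : V) : ℝ :=
  ∑ u, edgeWt m v u

set_option linter.unusedSectionVars false
set_option linter.unusedVariables false

section Aux
variable {V : Type*} [Fintype V] [DecidableEq V] (m : V → V → V → ℝ)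

lemma edgeWt_symm (hsymm1 : ∀ u v w, m u v w = m v u w) (v u : V) :
    edgeWt m v u = edgeWt m u v :=
  Finset.sum_congr rfl fun w _ => hsymm1 v u w

lemma edgeWt_nonneg (hnn : ∀ u v w, 0 ≤ m u v w) (v u : V) : 0 ≤ edgeWt m v u :=
  Finset.sum_nonneg fun w _ => hnn v u w

lemma sum_mid (hsymm2 : ∀ u v w, m u v w = m u w v) (v w : V) :
    ∑ u, m v u w = edgeWt m v w :=
  Finset.sum_congr rfl fun u _ => hsymm2 v u w

lemma col_sum (hsymm1 : ∀ u v w, m u v w = m v u w) (u : V) :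
    ∑ v, edgeWt m v u = vertWt m u :=
  Finset.sum_congr rfl fun v _ => edgeWt_symm m hsymm1 v u

/-- triple-sum symmetry -/
lemma triple_symm (hsymm1 : ∀ u v w, m u v w = m v u w)
    (hsymm2 : ∀ u v w, m u v w = m u w v) (g : V → ℝ) :
    ∑ v, ∑ u, ∑ w, m v u w * g w * g u = ∑ v, ∑ u, edgeWt m v u * g u * g v := by
  rw [Finset.sum_comm]
  refine Finset.sum_congr rfl fun u _ => ?_
  rw [Finset.sum_comm]
  refine Finset.sum_congr rfl fun w _ => ?_
  rw [← Finset.sum_mul, ← Finset.sum_mul]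
  have : ∑ v, m v u w = edgeWt m u w := by
    rw [← sum_mid m hsymm2 u w]
    exact Finset.sum_congr rfl fun v _ => hsymm1 v u w
  rw [this]

/-- the quadratic form of the averaging operator, symmetric in its arguments -/
lemma qform_symm (hsymm1 : ∀ u v w, m u v w = m v u w) (x y : V → ℝ) :
    ∑ v, ∑ u, edgeWt m v u * x u * y v = ∑ v, ∑ u, edgeWt m v u * y u * x v := by
  rw [Finset.sum_comm]
  exact Finset.sum_congr rfl fun a _ => Finset.sum_congr rfl fun b _ => by
    rw [edgeWt_symm m hsymm1]; ring

/-- column sums against a function -/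
lemma col_sum_fun (hsymm1 : ∀ u v w, m u v w = m v u w) (g : V → ℝ) :
    ∑ v, ∑ u, edgeWt m v u * g u = ∑ u, vertWt m u * g u := by
  rw [Finset.sum_comm]
  refine Finset.sum_congr rfl fun u _ => ?_
  rw [← Finset.sum_mul, col_sum m hsymm1]

/-- Per-vertex master inequality. -/
lemma per_vertex_master
    (hnn : ∀ u v w, 0 ≤ m u v w)
    (hsymm2 : ∀ u v w, m u v w = m u w v)
    (hpos : ∀ v, 0 < vertWt m v)
    (lam : ℝ)
    (hlocal : ∀ v : V, ∀ f : V → ℝ,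
      (∑ u, (edgeWt m v u / vertWt m v) * f u = 0) →
      ∑ u, (edgeWt m v u / vertWt m v) *
          ((∑ w, m v u w * f w) / edgeWt m v u) * f u ≤
        lam * ∑ u, (edgeWt m v u / vertWt m v) * f u ^ 2)
    (g : V → ℝ) (v : V) :
    (∑ u, ∑ w, m v u w * g w * g u)
        - vertWt m v * ((∑ u, edgeWt m v u * g u) / vertWt m v)^2
      ≤ lam * ((∑ u, edgeWt m v u * g u ^ 2)
        - vertWt m v * ((∑ u, edgeWt m v u * g u) / vertWt m v)^2) := by
  have hE : ∀ v u, edgeWt m v u = ∑ w, m v u w := fun _ _ => rfl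
  have hW : ∀ v, vertWt m v = ∑ u, edgeWt m v u := fun _ => rfl
  set c : ℝ := (∑ u, edgeWt m v u * g u) / vertWt m v with hc
  have hwv : vertWt m v ≠ 0 := (hpos v).ne'
  have hcs : ∑ u, edgeWt m v u * g u = vertWt m v * c := by
    rw [hc, mul_div_cancel₀ _ hwv]
  set f : V → ℝ := fun u => g u - c with hf
  have horth : ∑ u, (edgeWt m v u / vertWt m v) * f u = 0 := by
    have : ∀ u, (edgeWt m v u / vertWt m v) * f u
        = (edgeWt m v u * g u - edgeWt m v u * c) / vertWt m v := by
      intro u; rw [hf]; ring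
    rw [Finset.sum_congr rfl fun u _ => this u, ← Finset.sum_div,
      Finset.sum_sub_distrib, ← Finset.sum_mul, hcs, ← hW]
    field_simp
    ring
  have key := hlocal v f horth
  have hL : ∑ u, (edgeWt m v u / vertWt m v) * ((∑ w, m v u w * f w) / edgeWt m v u) * f u
      = (∑ u, ∑ w, m v u w * f w * f u) / vertWt m v := by
    have per : ∀ u, (edgeWt m v u / vertWt m v) * ((∑ w, m v u w * f w) / edgeWt m v u) * f u
        = (∑ w, m v u w * f w * f u) / vertWt m v := by
      intro u
      have hsm : ∑ w, m v u w * f w * f u = (∑ w, m v u w * f w) * f u := by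
        rw [Finset.sum_mul]
      by_cases h0 : edgeWt m v u = 0
      · have hz : ∀ w, m v u w = 0 := by
          have := (Finset.sum_eq_zero_iff_of_nonneg
            (fun w _ => hnn v u w)).mp ((hE v u).symm.trans h0)
          exact fun w => this w (mem_univ w)
        simp [h0, hz]
      · rw [hsm]; field_simp
    rw [Finset.sum_congr rfl fun u _ => per u, ← Finset.sum_div]
  have hR : ∑ u, (edgeWt m v u / vertWt m v) * f u ^ 2
      = (∑ u, edgeWt m v u * f u ^ 2) / vertWt m v := by
    have per : ∀ u, (edgeWt m v u / vertWt m v) * f u ^ 2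
        = (edgeWt m v u * f u ^ 2) / vertWt m v := by
      intro u; ring
    rw [Finset.sum_congr rfl fun u _ => per u, ← Finset.sum_div]
  rw [hL, hR, ← mul_div_assoc] at key
  have key2 : (∑ u, ∑ w, m v u w * f w * f u) ≤ lam * ∑ u, edgeWt m v u * f u ^ 2 :=
    (div_le_div_iff_of_pos_right (hpos v)).mp key
  have e3 : ∑ u, ∑ w, m v u w = vertWt m v := by
    rw [hW]; exact Finset.sum_congr rfl fun u _ => (hE v u).symm
  have e1 : ∑ u, ∑ w, m v u w * g u = vertWt m v * c := by
    rw [← hcs]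
    refine Finset.sum_congr rfl fun u _ => ?_
    rw [← Finset.sum_mul, ← hE]
  have e2 : ∑ u, ∑ w, m v u w * g w = vertWt m v * c := by
    rw [Finset.sum_comm, ← hcs]
    refine Finset.sum_congr rfl fun w _ => ?_
    rw [← Finset.sum_mul]
    congr 1
    rw [hE]
    exact Finset.sum_congr rfl fun u _ => hsymm2 v u w
  have eX : ∑ u, ∑ w, m v u w * f w * f u
      = (∑ u, ∑ w, m v u w * g w * g u) - vertWt m v * c ^ 2 := by
    have expand : ∀ u w, m v u w * f w * f u
        = m v u w * g w * g u - c * (m v u w * g u) - c * (m v u w * g w)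
            + c^2 * m v u w := by
      intro u w; rw [hf]; ring
    calc ∑ u, ∑ w, m v u w * f w * f u
        = ∑ u, ∑ w, (m v u w * g w * g u - c * (m v u w * g u) - c * (m v u w * g w)
            + c^2 * m v u w) :=
          Finset.sum_congr rfl fun u _ => Finset.sum_congr rfl fun w _ => expand u w
      _ = (∑ u, ∑ w, m v u w * g w * g u) - c * (∑ u, ∑ w, m v u w * g u)
            - c * (∑ u, ∑ w, m v u w * g w) + c^2 * (∑ u, ∑ w, m v u w) := by
          simp [Finset.sum_sub_distrib, Finset.sum_add_distrib, Finset.mul_sum]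
      _ = (∑ u, ∑ w, m v u w * g w * g u) - vertWt m v * c ^ 2 := by
          rw [e1, e2, e3]; ring
  have eY : ∑ u, edgeWt m v u * f u ^ 2
      = (∑ u, edgeWt m v u * g u ^ 2) - vertWt m v * c ^ 2 := by
    have expand : ∀ u, edgeWt m v u * f u ^ 2
        = edgeWt m v u * g u ^ 2 - 2 * c * (edgeWt m v u * g u) + c^2 * edgeWt m v u := by
      intro u; rw [hf]; ring
    calc ∑ u, edgeWt m v u * f u ^ 2
        = ∑ u, (edgeWt m v u * g u ^ 2 - 2 * c * (edgeWt m v u * g u)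
            + c^2 * edgeWt m v u) :=
          Finset.sum_congr rfl fun u _ => expand u
      _ = (∑ u, edgeWt m v u * g u ^ 2) - 2 * c * (∑ u, edgeWt m v u * g u)
            + c^2 * ∑ u, edgeWt m v u := by
          simp [Finset.sum_sub_distrib, Finset.sum_add_distrib, Finset.mul_sum]
      _ = _ := by rw [hcs, ← hW]; ring
  rw [eX, eY] at key2
  exact key2

/-- Summed master inequality: `E(g) - Q(g) ≤ lam (N(g) - Q(g))`. -/
lemma master
    (hnn : ∀ u v w, 0 ≤ m u v w)
    (hsymm1 : ∀ u v w, m u v w = m v u w)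
    (hsymm2 : ∀ u v w, m u v w = m u w v)
    (hpos : ∀ v, 0 < vertWt m v)
    (lam : ℝ)
    (hlocal : ∀ v : V, ∀ f : V → ℝ,
      (∑ u, (edgeWt m v u / vertWt m v) * f u = 0) →
      ∑ u, (edgeWt m v u / vertWt m v) *
          ((∑ w, m v u w * f w) / edgeWt m v u) * f u ≤
        lam * ∑ u, (edgeWt m v u / vertWt m v) * f u ^ 2)
    (g : V → ℝ) :
    (∑ v, ∑ u, edgeWt m v u * g u * g v)
        - (∑ v, vertWt m v * ((∑ u, edgeWt m v u * g u) / vertWt m v)^2)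
      ≤ lam * ((∑ v, vertWt m v * g v ^ 2)
        - ∑ v, vertWt m v * ((∑ u, edgeWt m v u * g u) / vertWt m v)^2) := by
  have hsle := Finset.sum_le_sum
    (fun v (_ : v ∈ (univ : Finset V)) =>
      per_vertex_master m hnn hsymm2 hpos lam hlocal g v)
  rw [Finset.sum_sub_distrib, ← Finset.mul_sum, Finset.sum_sub_distrib] at hsle
  rw [triple_symm m hsymm1 hsymm2 g] at hsle
  have hS : ∑ v, ∑ u, edgeWt m v u * g u ^ 2 = ∑ v, vertWt m v * g v ^ 2 := by
    have := col_sum_fun m hsymm1 (fun u => g u ^ 2)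
    exact this
  rw [hS] at hsle
  exact hsle

set_option maxHeartbeats 1000000 in
lemma exists_top
    (hnn : ∀ u v w, 0 ≤ m u v w)
    (hsymm1 : ∀ u v w, m u v w = m v u w)
    (hpos : ∀ v, 0 < vertWt m v)
    (hconn : ∀ u v : V, Relation.ReflTransGen (fun a b => a ≠ b ∧ edgeWt m a b ≠ 0) u v)
    (g : V → ℝ) (hg : ∑ v, vertWt m v * g v = 0)
    (hgN : ∑ v, vertWt m v * g v ^ 2 ≠ 0) :
    ∃ (μ : ℝ) (g₀ : V → ℝ),
      (∑ v, vertWt m v * g₀ v = 0) ∧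
      (∑ v, vertWt m v * g₀ v ^ 2 = 1) ∧
      (∀ v, ∑ u, edgeWt m v u * g₀ u = μ * (vertWt m v * g₀ v)) ∧
      μ < 1 ∧
      (∀ h : V → ℝ, (∑ v, vertWt m v * h v = 0) →
        ∑ v, ∑ u, edgeWt m v u * h u * h v ≤ μ * ∑ v, vertWt m v * h v ^ 2) := by
  classical
  set W : V → ℝ := vertWt m with hWdef
  set Ew : V → V → ℝ := edgeWt m with hEwdef
  set φ : (V → ℝ) → ℝ := fun h => ∑ v, ∑ u, Ew v u * h u * h v with hφdef
  set S : Set (V → ℝ) := {h | ∑ v, W v * h v = 0} ∩ {h | ∑ v, W v * h v ^ 2 = 1}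
    with hSdef
  -- continuity facts
  have cont1 : Continuous fun h : V → ℝ => ∑ v, W v * h v :=
    continuous_finset_sum _ fun v _ => continuous_const.mul (continuous_apply v)
  have cont2 : Continuous fun h : V → ℝ => ∑ v, W v * h v ^ 2 :=
    continuous_finset_sum _ fun v _ => continuous_const.mul ((continuous_apply v).pow 2)
  have contφ : Continuous φ :=
    continuous_finset_sum _ fun v _ =>
      continuous_finset_sum _ fun u _ =>
        (continuous_const.mul (continuous_apply u)).mul (continuous_apply v)
  have hSclosed : IsClosed S :=
    (isClosed_eq cont1 continuous_const).inter (isClosed_eq cont2 continuous_const)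
  -- boundedness
  have hWpos : ∀ v, 0 < W v := hpos
  set R : ℝ := Real.sqrt (∑ u, 1 / W u) with hRdef
  have hRnn : 0 ≤ R := Real.sqrt_nonneg _
  have hSsub : S ⊆ Metric.closedBall 0 R := by
    intro h hh
    rw [Metric.mem_closedBall, dist_zero_right]
    rw [pi_norm_le_iff_of_nonneg hRnn]
    intro v
    have h1 : W v * h v ^ 2 ≤ 1 := by
      rw [← hh.2]
      refine Finset.single_le_sum (f := fun u => W u * h u ^ 2) ?_ (mem_univ v)
      intro u _
      exact mul_nonneg (hWpos u).le (sq_nonneg _)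
    have h2 : h v ^ 2 ≤ 1 / W v := by
      rw [le_div_iff₀ (hWpos v)]
      linarith [h1, mul_comm (W v) (h v ^ 2)]
    have h3 : (1 : ℝ) / W v ≤ ∑ u, 1 / W u :=
      Finset.single_le_sum (f := fun u => 1 / W u)
        (fun u _ => (one_div_pos.mpr (hWpos u)).le) (mem_univ v)
    have h4 : h v ^ 2 ≤ R ^ 2 := by
      rw [hRdef, Real.sq_sqrt (Finset.sum_nonneg fun u _ => (one_div_pos.mpr (hWpos u)).le)]
      linarith
    calc ‖h v‖ = Real.sqrt (h v ^ 2) := by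
          rw [Real.sqrt_sq_eq_abs, Real.norm_eq_abs]
      _ ≤ Real.sqrt (R ^ 2) := Real.sqrt_le_sqrt h4
      _ = R := by rw [Real.sqrt_sq hRnn]
  have hScompact : IsCompact S :=
    Metric.isCompact_of_isClosed_isBounded hSclosed
      (Metric.isBounded_closedBall.subset hSsub)
  -- nonempty
  have hNg : 0 < ∑ v, W v * g v ^ 2 :=
    lt_of_le_of_ne (Finset.sum_nonneg fun v _ => mul_nonneg (hWpos v).le (sq_nonneg _))
      (Ne.symm hgN)
  set s : ℝ := Real.sqrt (∑ v, W v * g v ^ 2) with hsdef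
  have hs : 0 < s := Real.sqrt_pos.mpr hNg
  have hss : s * s = ∑ v, W v * g v ^ 2 := Real.mul_self_sqrt hNg.le
  have hSne : S.Nonempty := by
    refine ⟨fun v => g v / s, ?_, ?_⟩
    · show ∑ v, W v * (g v / s) = 0
      have : ∀ v, W v * (g v / s) = (W v * g v) / s := fun v => by ring
      rw [Finset.sum_congr rfl fun v _ => this v, ← Finset.sum_div, hg, zero_div]
    · show ∑ v, W v * (g v / s) ^ 2 = 1
      have : ∀ v, W v * (g v / s) ^ 2 = (W v * g v ^ 2) / (s * s) := fun v => by ring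
      rw [Finset.sum_congr rfl fun v _ => this v, ← Finset.sum_div, hss,
        div_self hNg.ne']
  obtain ⟨g₀, hg₀S, hmax⟩ := hScompact.exists_isMaxOn hSne contφ.continuousOn
  obtain ⟨hg₀o', hg₀n'⟩ := hg₀S
  replace hg₀o : ∑ v, W v * g₀ v = 0 := hg₀o'
  replace hg₀n : ∑ v, W v * g₀ v ^ 2 = 1 := hg₀n'
  set μ : ℝ := φ g₀ with hμdef
  -- top bound
  have htop : ∀ h : V → ℝ, (∑ v, W v * h v = 0) →
      φ h ≤ μ * ∑ v, W v * h v ^ 2 := by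
    intro h hho
    by_cases hN0 : ∑ v, W v * h v ^ 2 = 0
    · have hz : ∀ v, h v = 0 := by
        intro v
        have := (Finset.sum_eq_zero_iff_of_nonneg
          (fun v (_ : v ∈ univ) => mul_nonneg (hWpos v).le (sq_nonneg _) :
            ∀ v ∈ univ, 0 ≤ W v * h v ^ 2)).mp hN0 v (mem_univ v)
        have h2 : h v ^ 2 = 0 := by
          rcases mul_eq_zero.mp this with h' | h'
          · exact absurd h' (hWpos v).ne'
          · exact h'
        exact pow_eq_zero_iff (n := 2) (by norm_num) |>.mp h2
      have : φ h = 0 := by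
        rw [hφdef]
        refine Finset.sum_eq_zero fun v _ => Finset.sum_eq_zero fun u _ => by
          rw [hz u]; ring
      rw [this, hN0, mul_zero]
    · have hNpos : 0 < ∑ v, W v * h v ^ 2 :=
        lt_of_le_of_ne (Finset.sum_nonneg fun v _ => mul_nonneg (hWpos v).le (sq_nonneg _))
          (Ne.symm hN0)
      set t : ℝ := Real.sqrt (∑ v, W v * h v ^ 2) with htdef
      have ht : 0 < t := Real.sqrt_pos.mpr hNpos
      have htt : t * t = ∑ v, W v * h v ^ 2 := Real.mul_self_sqrt hNpos.le
      have hmem : (fun v => h v / t) ∈ S := by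
        refine ⟨?_, ?_⟩
        · show ∑ v, W v * (h v / t) = 0
          have : ∀ v, W v * (h v / t) = (W v * h v) / t := fun v => by ring
          rw [Finset.sum_congr rfl fun v _ => this v, ← Finset.sum_div, hho, zero_div]
        · show ∑ v, W v * (h v / t) ^ 2 = 1
          have : ∀ v, W v * (h v / t) ^ 2 = (W v * h v ^ 2) / (t * t) := fun v => by ring
          rw [Finset.sum_congr rfl fun v _ => this v, ← Finset.sum_div, htt,
            div_self hNpos.ne']
      have hle := hmax hmem
      have hφscale : φ (fun v => h v / t) = φ h / (t * t) := by
        rw [hφdef]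
        have per : ∀ v u, Ew v u * (h u / t) * (h v / t)
            = (Ew v u * h u * h v) / (t * t) := fun v u => by ring
        simp only
        rw [Finset.sum_congr rfl fun v _ => Finset.sum_congr rfl fun u _ => per v u]
        rw [Finset.sum_congr rfl fun v (_ : v ∈ univ) => (Finset.sum_div univ _ (t*t)).symm,
          ← Finset.sum_div]
      rw [Set.mem_setOf_eq] at hle
      rw [hφscale] at hle
      rw [div_le_iff₀ (mul_pos ht ht)] at hle
      rw [← htt]
      linarith [hle]
  -- eigenvector property
  set k : V → ℝ := fun v => (∑ u, Ew v u * g₀ u) / W v - μ * g₀ v with hkdef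
  have hko : ∑ v, W v * k v = 0 := by
    have per : ∀ v, W v * k v = (∑ u, Ew v u * g₀ u) - μ * (W v * g₀ v) := by
      intro v
      rw [hkdef]
      field_simp [(hWpos v).ne']
    rw [Finset.sum_congr rfl fun v _ => per v, Finset.sum_sub_distrib,
      ← Finset.mul_sum, hg₀o, mul_zero, sub_zero, col_sum_fun m hsymm1, hg₀o]
  -- PSD of B h := μ * N h - φ h on the orthogonal complement
  have hBpsd : ∀ h : V → ℝ, (∑ v, W v * h v = 0) →
      0 ≤ μ * (∑ v, W v * h v ^ 2) - φ h := fun h hh => by linarith [htop h hh]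
  -- quadratic expansion
  set b : ℝ := μ * (∑ v, W v * g₀ v * k v) - ∑ v, ∑ u, Ew v u * g₀ u * k v with hbdef
  set cc : ℝ := μ * (∑ v, W v * k v ^ 2) - φ k with hccdef
  have hquad : ∀ t : ℝ, 0 ≤ 2 * t * b + t ^ 2 * cc := by
    intro t
    set x : V → ℝ := fun v => g₀ v + t * k v with hxdef
    have hxo : ∑ v, W v * x v = 0 := by
      have per : ∀ v, W v * x v = W v * g₀ v + t * (W v * k v) := fun v => by
        rw [hxdef]; ring
      rw [Finset.sum_congr rfl fun v _ => per v, Finset.sum_add_distrib,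
        ← Finset.mul_sum, hg₀o, hko, mul_zero, add_zero]
    have hB := hBpsd x hxo
    have hNx : ∑ v, W v * x v ^ 2
        = (∑ v, W v * g₀ v ^ 2) + 2 * t * (∑ v, W v * g₀ v * k v)
          + t ^ 2 * (∑ v, W v * k v ^ 2) := by
      have per : ∀ v, W v * x v ^ 2
          = W v * g₀ v ^ 2 + 2 * t * (W v * g₀ v * k v) + t ^ 2 * (W v * k v ^ 2) :=
        fun v => by rw [hxdef]; ring
      rw [Finset.sum_congr rfl fun v _ => per v]
      simp [Finset.sum_add_distrib, Finset.mul_sum]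
    have hφx : φ x = φ g₀ + t * (∑ v, ∑ u, Ew v u * k u * g₀ v)
        + t * (∑ v, ∑ u, Ew v u * g₀ u * k v) + t ^ 2 * φ k := by
      rw [hφdef]
      have per : ∀ v u, Ew v u * x u * x v
          = Ew v u * g₀ u * g₀ v + t * (Ew v u * k u * g₀ v)
            + t * (Ew v u * g₀ u * k v) + t ^ 2 * (Ew v u * k u * k v) :=
        fun v u => by rw [hxdef]; ring
      simp only
      rw [Finset.sum_congr rfl fun v _ => Finset.sum_congr rfl fun u _ => per v u]
      simp [Finset.sum_add_distrib, Finset.mul_sum]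
    have hsymq : ∑ v, ∑ u, Ew v u * k u * g₀ v = ∑ v, ∑ u, Ew v u * g₀ u * k v :=
      qform_symm m hsymm1 k g₀
    rw [hsymq] at hφx
    rw [hNx, hφx, hg₀n, ← hμdef] at hB
    have heq : μ * (1 + 2 * t * (∑ v, W v * g₀ v * k v) + t ^ 2 * (∑ v, W v * k v ^ 2))
        - (μ + t * (∑ v, ∑ u, Ew v u * g₀ u * k v)
          + t * (∑ v, ∑ u, Ew v u * g₀ u * k v) + t ^ 2 * φ k)
        = 2 * t * b + t ^ 2 * cc := by
      rw [hbdef, hccdef]; ring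
    linarith [hB, heq.ge, heq.le]
  have hb0 : b = 0 := by
    by_contra hb
    have hb2 : 0 < b ^ 2 := by
      rcases (sq_nonneg b).lt_or_eq with h | h
      · exact h
      · exact absurd (pow_eq_zero_iff (two_ne_zero) |>.mp h.symm) hb
    set ε : ℝ := 1 / (|cc| + 1) with hεdef
    have hεpos : 0 < ε := by positivity
    have hεcc : ε * (|cc| + 1) = 1 := by
      rw [hεdef]; field_simp
    have h1 := hquad (-b * ε)
    have h2 : cc ≤ |cc| := le_abs_self cc
    nlinarith [h1, hb2, hεpos, h2, mul_pos hεpos hb2, sq_nonneg (b * ε)]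
  have hkz : ∀ v, k v = 0 := by
    have hbk : b = -∑ v, W v * k v ^ 2 := by
      rw [hbdef]
      have per : ∀ v, ∑ u, Ew v u * g₀ u * k v
          = W v * (k v + μ * g₀ v) * k v := by
        intro v
        rw [← Finset.sum_mul]
        congr 1
        have : (∑ u, Ew v u * g₀ u) / W v = k v + μ * g₀ v := by
          rw [hkdef]; ring
        calc ∑ u, Ew v u * g₀ u = W v * ((∑ u, Ew v u * g₀ u) / W v) := by
              rw [mul_div_cancel₀ _ (hWpos v).ne']
          _ = W v * (k v + μ * g₀ v) := by rw [this]
      rw [Finset.sum_congr rfl fun v _ => per v]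
      have expand : ∀ v, W v * (k v + μ * g₀ v) * k v
          = W v * k v ^ 2 + μ * (W v * g₀ v * k v) := fun v => by ring
      rw [Finset.sum_congr rfl fun v _ => expand v, Finset.sum_add_distrib,
        ← Finset.mul_sum]
      ring
    have hsum0 : ∑ v, W v * k v ^ 2 = 0 := by
      rw [hbk] at hb0; linarith
    intro v
    have := (Finset.sum_eq_zero_iff_of_nonneg
      (fun v (_ : v ∈ univ) => mul_nonneg (hWpos v).le (sq_nonneg _) :
        ∀ v ∈ univ, 0 ≤ W v * k v ^ 2)).mp hsum0 v (mem_univ v)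
    rcases mul_eq_zero.mp this with h' | h'
    · exact absurd h' (hWpos v).ne'
    · exact pow_eq_zero_iff (n := 2) (by norm_num) |>.mp h'
  have heig : ∀ v, ∑ u, Ew v u * g₀ u = μ * (W v * g₀ v) := by
    intro v
    have := hkz v
    rw [hkdef] at this
    have h2 : (∑ u, Ew v u * g₀ u) / W v = μ * g₀ v := by
      simp only at this
      linarith [this]
    calc ∑ u, Ew v u * g₀ u = W v * ((∑ u, Ew v u * g₀ u) / W v) := by
          rw [mul_div_cancel₀ _ (hWpos v).ne']
      _ = μ * (W v * g₀ v) := by rw [h2]; ring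
  -- μ < 1
  have hVne : (univ : Finset V).Nonempty := by
    by_contra hne
    rw [Finset.not_nonempty_iff_eq_empty] at hne
    rw [hne, Finset.sum_empty] at hg₀n
    exact one_ne_zero hg₀n.symm
  obtain ⟨v₀, _, hv₀⟩ := Finset.exists_max_image univ g₀ hVne
  set M : ℝ := g₀ v₀ with hMdef
  have hMax : ∀ v, g₀ v ≤ M := fun v => hv₀ v (mem_univ v)
  have hWsum : 0 < ∑ v, W v := Finset.sum_pos (fun v _ => hWpos v) hVne
  have hMpos : 0 < M := by
    by_contra hM
    push_neg at hM
    have hle : ∀ v ∈ univ, (0:ℝ) ≤ -(W v * g₀ v) := by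
      intro v _
      have : g₀ v ≤ 0 := le_trans (hMax v) hM
      nlinarith [hWpos v]
    have hz : ∑ v, -(W v * g₀ v) = 0 := by
      rw [Finset.sum_neg_distrib, hg₀o, neg_zero]
    have hallz := (Finset.sum_eq_zero_iff_of_nonneg hle).mp hz
    have hg₀z : ∀ v, g₀ v = 0 := by
      intro v
      have := hallz v (mem_univ v)
      have h2 : W v * g₀ v = 0 := by linarith
      rcases mul_eq_zero.mp h2 with h' | h'
      · exact absurd h' (hWpos v).ne'
      · exact h'
    rw [Finset.sum_congr rfl (fun v _ => by rw [hg₀z v]; ring :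
      ∀ v ∈ univ, W v * g₀ v ^ 2 = 0), Finset.sum_const_zero] at hg₀n
    exact one_ne_zero hg₀n.symm
  have hμle : μ ≤ 1 := by
    have h1 : ∑ u, Ew v₀ u * g₀ u ≤ W v₀ * M := by
      calc ∑ u, Ew v₀ u * g₀ u ≤ ∑ u, Ew v₀ u * M :=
            Finset.sum_le_sum fun u _ =>
              mul_le_mul_of_nonneg_left (hMax u) (edgeWt_nonneg m hnn v₀ u)
        _ = (∑ u, Ew v₀ u) * M := by rw [Finset.sum_mul]
        _ = W v₀ * M := rfl
    have h2 := heig v₀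
    have h3 : 0 < W v₀ * M := mul_pos (hWpos v₀) hMpos
    nlinarith [h1, h2, h3]
  have hμlt : μ < 1 := by
    rcases lt_or_eq_of_le hμle with h | h
    · exact h
    · exfalso
      -- μ = 1 : propagate maximum
      have hallM : ∀ v, g₀ v = M := by
        intro v
        have hc := hconn v₀ v
        induction hc with
        | refl => rfl
        | @tail b c hab hbc ih =>
          have heigb := heig b
          rw [h, one_mul] at heigb
          have hsub : ∑ u, Ew b u * (M - g₀ u) = 0 := by
            have expand : ∀ u, Ew b u * (M - g₀ u) = Ew b u * M - Ew b u * g₀ u :=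
              fun u => by ring
            rw [Finset.sum_congr rfl fun u _ => expand u, Finset.sum_sub_distrib,
              ← Finset.sum_mul, heigb, ih]
            show (∑ u, Ew b u) * M - W b * M = 0
            have : (∑ u, Ew b u) = W b := rfl
            rw [this]; ring
          have hterm := (Finset.sum_eq_zero_iff_of_nonneg
            (fun u (_ : u ∈ univ) =>
              mul_nonneg (edgeWt_nonneg m hnn b u) (by linarith [hMax u]))).mp
            hsub c (mem_univ c)
          rcases mul_eq_zero.mp hterm with h' | h'
          · exact absurd h' hbc.2
          · linarith
      have : ∑ v, W v * g₀ v = M * ∑ v, W v := by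
        rw [Finset.mul_sum]
        exact Finset.sum_congr rfl fun v _ => by rw [hallM v]; ring
      rw [hg₀o] at this
      nlinarith [hWsum, hMpos]
  exact ⟨μ, g₀, hg₀o, hg₀n, heig, hμlt, htop⟩


end Aux


/-- Trickle-down, positive direction (Oppenheim). `(X,w)` is a weighted 2-dimensional
simplicial complex on vertex set `V`, presented by the symmetric probability distribution `m`
on ordered triangles (this encodes the balanced weight function). `A` is the random-walk
averaging operator `Ag(v) = E_{u~v}[g(u)]` and, for each vertex `v`, `A_v` is the averaging
operator of the link of `v` with the induced normalized weights. If the 1-skeleton is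
connected and every link satisfies `⟨A_v f, f⟩ ≤ λ⟨f,f⟩` for all `f ⊥ 𝟙` on the link, with
`λ < 1/2`, then `⟨Ag, g⟩ ≤ (λ/(1−λ))·⟨g,g⟩` for every `g ⊥ 𝟙` on the whole vertex set. -/
theorem trickle_down_positive {V : Type*} [Fintype V] [DecidableEq V]
    (m : V → V → V → ℝ)
    (hnn : ∀ u v w, 0 ≤ m u v w)
    (hsymm1 : ∀ u v w, m u v w = m v u w)
    (hsymm2 : ∀ u v w, m u v w = m u w v)
    (hdist : ∀ u v w, (u = v ∨ v = w ∨ u = w) → m u v w = 0)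
    (hsum : ∑ u, ∑ v, ∑ w, m u v w = 1)
    (hpos : ∀ v, 0 < vertWt m v)
    -- the 1-skeleton is connected
    (hconn : ∀ u v : V, Relation.ReflTransGen (fun a b => a ≠ b ∧ edgeWt m a b ≠ 0) u v)
    (lam : ℝ) (hlam : lam < 1 / 2)
    -- every link is a one-sided λ-spectral expander
    (hlocal : ∀ v : V, ∀ f : V → ℝ,
      (∑ u, (edgeWt m v u / vertWt m v) * f u = 0) →
      ∑ u, (edgeWt m v u / vertWt m v) *
          ((∑ w, m v u w * f w) / edgeWt m v u) * f u ≤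
        lam * ∑ u, (edgeWt m v u / vertWt m v) * f u ^ 2) :
    ∀ g : V → ℝ, (∑ v, vertWt m v * g v = 0) →
      ∑ v, vertWt m v * ((∑ u, edgeWt m v u * g u) / vertWt m v) * g v ≤
        (lam / (1 - lam)) * ∑ v, vertWt m v * g v ^ 2 := by
  intro g hg
  by_cases hN : ∑ v, vertWt m v * g v ^ 2 = 0
  · have hz : ∀ v, g v = 0 := by
      intro v
      have := (Finset.sum_eq_zero_iff_of_nonneg
        (fun v (_ : v ∈ univ) => mul_nonneg (hpos v).le (sq_nonneg _) :
          ∀ v ∈ univ, 0 ≤ vertWt m v * g v ^ 2)).mp hN v (mem_univ v)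
      rcases mul_eq_zero.mp this with h' | h'
      · exact absurd h' (hpos v).ne'
      · exact pow_eq_zero_iff (n := 2) (by norm_num) |>.mp h'
    have hL : ∑ v, vertWt m v * ((∑ u, edgeWt m v u * g u) / vertWt m v) * g v = 0 :=
      Finset.sum_eq_zero fun v _ => by rw [hz v]; ring
    rw [hL, hN, mul_zero]
  · obtain ⟨μ, g₀, hg₀o, hg₀n, heig, hμlt, htop⟩ :=
      exists_top m hnn hsymm1 hpos hconn g hg hN
    have hmaster := master m hnn hsymm1 hsymm2 hpos lam hlocal g₀
    have hE₀ : ∑ v, ∑ u, edgeWt m v u * g₀ u * g₀ v = μ := by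
      have per : ∀ v, ∑ u, edgeWt m v u * g₀ u * g₀ v
          = μ * (vertWt m v * g₀ v ^ 2) := by
        intro v
        rw [← Finset.sum_mul, heig v]; ring
      rw [Finset.sum_congr rfl fun v _ => per v, ← Finset.mul_sum, hg₀n, mul_one]
    have hQ₀ : ∑ v, vertWt m v * ((∑ u, edgeWt m v u * g₀ u) / vertWt m v) ^ 2
        = μ ^ 2 := by
      have per : ∀ v, vertWt m v * ((∑ u, edgeWt m v u * g₀ u) / vertWt m v) ^ 2
          = μ ^ 2 * (vertWt m v * g₀ v ^ 2) := by
        intro v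
        rw [heig v]
        have hwv : vertWt m v ≠ 0 := (hpos v).ne'
        field_simp
      rw [Finset.sum_congr rfl fun v _ => per v, ← Finset.mul_sum, hg₀n, mul_one]
    rw [hE₀, hQ₀, hg₀n] at hmaster
    have h1lam : 0 < 1 - lam := by linarith
    have hμρ : μ ≤ lam / (1 - lam) := by
      rw [le_div_iff₀ h1lam]
      nlinarith [hmaster, hμlt]
    have hLHS : ∑ v, vertWt m v * ((∑ u, edgeWt m v u * g u) / vertWt m v) * g v
        = ∑ v, ∑ u, edgeWt m v u * g u * g v := by
      refine Finset.sum_congr rfl fun v _ => ?_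
      have hwv : vertWt m v ≠ 0 := (hpos v).ne'
      have hr : ∑ u, edgeWt m v u * g u * g v = (∑ u, edgeWt m v u * g u) * g v := by
        rw [Finset.sum_mul]
      rw [hr]
      field_simp
    rw [hLHS]
    have hNnn : 0 ≤ ∑ v, vertWt m v * g v ^ 2 :=
      Finset.sum_nonneg fun v _ => mul_nonneg (hpos v).le (sq_nonneg _)
    calc ∑ v, ∑ u, edgeWt m v u * g u * g v
        ≤ μ * ∑ v, vertWt m v * g v ^ 2 := htop g hg
      _ ≤ (lam / (1 - lam)) * ∑ v, vertWt m v * g v ^ 2 :=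
          mul_le_mul_of_nonneg_right hμρ hNnn
end

section
/- With the same setup as the trickle-down theorem, suppose for every vertex v the local operator satisfies ⟨A_v f, f⟩ ≥ η⟨f,f⟩ for all f on the link of v (where η ∈ [−1, 0)). Then for every g on X(0), ⟨Ag, g⟩ ≥ (η/(1−η))·⟨g,g⟩. -/
open Finset

/-- Trickle-down, negative direction. With the same setup as the trickle-down theorem
(a nonempty weighted 2-dimensional simplicial complex with balanced weights encoded by the
symmetric distribution `m` on ordered triangles), if every local operator satisfies
`⟨A_v f, f⟩ ≥ η⟨f,f⟩` for all `f` on the link of `v` (with `η ∈ [−1,0)`), then for every `g`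
on the vertex set, `⟨Ag, g⟩ ≥ (η/(1−η))·⟨g,g⟩`. -/
theorem trickle_down_negative {V : Type*} [Fintype V] [DecidableEq V] [Nonempty V]
    (m : V → V → V → ℝ)
    (hnn : ∀ u v w, 0 ≤ m u v w)
    (hsymm1 : ∀ u v w, m u v w = m v u w)
    (hsymm2 : ∀ u v w, m u v w = m u w v)
    (hdist : ∀ u v w, (u = v ∨ v = w ∨ u = w) → m u v w = 0)
    (hsum : ∑ u, ∑ v, ∑ w, m u v w = 1)
    (hpos : ∀ v, 0 < vertWt m v)
    (eta : ℝ) (heta1 : -1 ≤ eta) (heta2 : eta < 0)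
    (hlocal : ∀ v : V, ∀ f : V → ℝ,
      eta * ∑ u, (edgeWt m v u / vertWt m v) * f u ^ 2 ≤
        ∑ u, (edgeWt m v u / vertWt m v) *
          ((∑ w, m v u w * f w) / edgeWt m v u) * f u) :
    ∀ g : V → ℝ,
      (eta / (1 - eta)) * ∑ v, vertWt m v * g v ^ 2 ≤
        ∑ v, vertWt m v * ((∑ u, edgeWt m v u * g u) / vertWt m v) * g v := by
  intro g
  have h1e : (0:ℝ) < 1 - eta := by linarith
  have h2e : (0:ℝ) < 1 - 2*eta := by linarith
  have hene : eta - 1 ≠ 0 := by intro h; linarith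
  set t : ℝ := eta / (eta - 1) with htdef
  -- basic facts
  have hesymm : ∀ v u, edgeWt m v u = edgeWt m u v := fun v u =>
    Finset.sum_congr rfl fun w _ => hsymm1 v u w
  have hmz : ∀ v u, edgeWt m v u = 0 → ∀ w, m v u w = 0 := by
    intro v u h w
    exact (Finset.sum_eq_zero_iff_of_nonneg (fun w _ => hnn v u w)).mp h w (Finset.mem_univ w)
  -- cleaned local inequality (denominators removed)
  have hclean : ∀ v (f : V → ℝ),
      eta * ∑ u, edgeWt m v u * f u ^ 2 ≤ ∑ u, (∑ w, m v u w * f w) * f u := by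
    intro v f
    have hD := hpos v
    have h := hlocal v f
    have hL : (∑ u, (edgeWt m v u / vertWt m v) * f u ^ 2)
        = (∑ u, edgeWt m v u * f u ^ 2) / vertWt m v := by
      rw [Finset.sum_div]; exact Finset.sum_congr rfl fun u _ => by ring
    have hR : (∑ u, (edgeWt m v u / vertWt m v) *
          ((∑ w, m v u w * f w) / edgeWt m v u) * f u)
        = (∑ u, (∑ w, m v u w * f w) * f u) / vertWt m v := by
      rw [Finset.sum_div]
      refine Finset.sum_congr rfl fun u _ => ?_
      by_cases he : edgeWt m v u = 0
      · rw [he, Finset.sum_eq_zero (fun w _ => by rw [hmz v u he w]; ring)]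
        simp
      · field_simp
    rw [hL, hR, ← mul_div_assoc, div_le_div_iff₀ hD hD] at h
    exact le_of_mul_le_mul_right h hD
  set Nq := ∑ v, vertWt m v * g v ^ 2 with hNdef
  set Qq := ∑ v, ∑ u, edgeWt m v u * g u * g v with hQdef
  -- rewrite the goal's RHS
  have hgoal : (∑ v, vertWt m v * ((∑ u, edgeWt m v u * g u) / vertWt m v) * g v) = Qq := by
    rw [hQdef]
    refine Finset.sum_congr rfl fun v _ => ?_
    have : vertWt m v * ((∑ u, edgeWt m v u * g u) / vertWt m v)
        = ∑ u, edgeWt m v u * g u := by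
      field_simp
      exact mul_div_cancel_left₀ _ (hpos v).ne'
    rw [this, Finset.sum_mul]
  -- sum identities
  have hI1 : (∑ v, ∑ u, edgeWt m v u * g u ^ 2) = Nq := by
    rw [hNdef, Finset.sum_comm]
    refine Finset.sum_congr rfl fun u _ => ?_
    rw [← Finset.sum_mul]
    congr 1
    exact Finset.sum_congr rfl fun v _ => hesymm v u
  have hI2 : (∑ v, ∑ u, edgeWt m v u * g v ^ 2) = Nq := by
    rw [hNdef]
    refine Finset.sum_congr rfl fun v _ => ?_
    rw [← Finset.sum_mul]
    rfl
  have hT : (∑ v, ∑ u, (∑ w, m v u w * g w) * g u) = Qq := by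
    have step1 : (∑ v, ∑ u, (∑ w, m v u w * g w) * g u)
        = ∑ v, ∑ u, ∑ w, m u w v * g w * g u := by
      refine Finset.sum_congr rfl fun v _ => Finset.sum_congr rfl fun u _ => ?_
      rw [Finset.sum_mul]
      exact Finset.sum_congr rfl fun w _ => by rw [hsymm1 v u w, hsymm2 u v w]
    rw [step1, Finset.sum_comm]
    refine Finset.sum_congr rfl fun u _ => ?_
    rw [Finset.sum_comm]
    refine Finset.sum_congr rfl fun w _ => ?_
    rw [← Finset.sum_mul, ← Finset.sum_mul]
    rfl
  have hT2 : (∑ v, ∑ u, (∑ w, m v u w * g w) * g v) = Qq := by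
    have step1 : (∑ v, ∑ u, (∑ w, m v u w * g w) * g v)
        = ∑ v, ∑ u, ∑ w, m v w u * g w * g v := by
      refine Finset.sum_congr rfl fun v _ => Finset.sum_congr rfl fun u _ => ?_
      rw [Finset.sum_mul]
      exact Finset.sum_congr rfl fun w _ => by rw [hsymm2 v u w]
    rw [step1]
    refine Finset.sum_congr rfl fun v _ => ?_
    rw [Finset.sum_comm]
    refine Finset.sum_congr rfl fun w _ => ?_
    rw [← Finset.sum_mul, ← Finset.sum_mul]
    rfl
  -- the summed, shifted local inequality
  have hbig : eta * ∑ v, ∑ u, edgeWt m v u * (g u + t * g v) ^ 2 ≤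
      ∑ v, ∑ u, (∑ w, m v u w * (g w + t * g v)) * (g u + t * g v) := by
    rw [Finset.mul_sum]
    exact Finset.sum_le_sum fun v _ => hclean v (fun u => g u + t * g v)
  have hL : (∑ v, ∑ u, edgeWt m v u * (g u + t * g v) ^ 2)
      = Nq + 2*t*Qq + t^2*Nq := by
    have : (∑ v, ∑ u, edgeWt m v u * (g u + t * g v) ^ 2)
        = ∑ v, ∑ u, (edgeWt m v u * g u ^ 2 + 2*t*(edgeWt m v u * g u * g v)
            + t^2*(edgeWt m v u * g v ^ 2)) := by
      exact Finset.sum_congr rfl fun v _ => Finset.sum_congr rfl fun u _ => by ring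
    rw [this]
    simp only [Finset.sum_add_distrib, ← Finset.mul_sum]
    rw [hI1, hI2, hQdef]
  have hR : (∑ v, ∑ u, (∑ w, m v u w * (g w + t * g v)) * (g u + t * g v))
      = Qq + 2*t*Qq + t^2*Nq := by
    have key : ∀ v u, (∑ w, m v u w * (g w + t * g v)) * (g u + t * g v)
        = (∑ w, m v u w * g w) * g u + t*((∑ w, m v u w * g w) * g v)
          + t*(edgeWt m v u * g u * g v) + t^2*(edgeWt m v u * g v ^ 2) := by
      intro v u
      have hs : (∑ w, m v u w * (g w + t * g v))
          = (∑ w, m v u w * g w) + edgeWt m v u * (t * g v) := by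
        rw [show edgeWt m v u = ∑ w, m v u w from rfl, Finset.sum_mul,
          ← Finset.sum_add_distrib]
        exact Finset.sum_congr rfl fun w _ => by ring
      rw [hs]; ring
    have : (∑ v, ∑ u, (∑ w, m v u w * (g w + t * g v)) * (g u + t * g v))
        = ∑ v, ∑ u, ((∑ w, m v u w * g w) * g u + t*((∑ w, m v u w * g w) * g v)
          + t*(edgeWt m v u * g u * g v) + t^2*(edgeWt m v u * g v ^ 2)) := by
      exact Finset.sum_congr rfl fun v _ => Finset.sum_congr rfl fun u _ => key v u
    rw [this]
    simp only [Finset.sum_add_distrib, ← Finset.mul_sum]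
    rw [hT, hT2, hQdef, hI2]
    ring
  rw [hL, hR] at hbig
  rw [hgoal]
  -- final algebra: clear t = eta/(eta-1)
  have h' := mul_le_mul_of_nonneg_left hbig (sq_nonneg (eta - 1))
  have eL : (eta-1)^2 * (eta * (Nq + 2*t*Qq + t^2*Nq))
      = eta * ((eta-1)^2*Nq + 2*eta*(eta-1)*Qq + eta^2*Nq) := by
    rw [htdef]; field_simp
  have eR : (eta-1)^2 * (Qq + 2*t*Qq + t^2*Nq)
      = (eta-1)^2*Qq + 2*eta*(eta-1)*Qq + eta^2*Nq := by
    rw [htdef]; field_simp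
  rw [eL, eR] at h'
  rw [div_mul_eq_mul_div, div_le_iff₀ h1e]
  nlinarith [h', h1e, h2e, mul_pos h1e h2e]
end

section
/- Let (X,w) be a weighted 2-dimensional simplicial complex with balanced weights, A the weighted averaging operator on vertices, and for each vertex v let g_v denote the restriction of g: X(0) → ℝ to the link X_v. Then ⟨Ag, g⟩_X = E_{v ~ w|X(0)}[⟨A_v g_v, g_v⟩_{X_v}], where the expectations and inner products use the balanced weight distributions. -/
open Finset

/-- Local-to-global decomposition of the quadratic form: for a weighted 2-dimensional
simplicial complex with balanced weights (encoded by the symmetric probability distribution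
`m` on ordered triangles), the averaging operator `A` on vertices and the link averaging
operators `A_v` satisfy `⟨Ag, g⟩_X = E_{v ~ w|X(0)} [⟨A_v g_v, g_v⟩_{X_v}]`. -/
theorem quadratic_form_local_decomposition {V : Type*} [Fintype V] [DecidableEq V]
    (m : V → V → V → ℝ)
    (hnn : ∀ u v w, 0 ≤ m u v w)
    (hsymm1 : ∀ u v w, m u v w = m v u w)
    (hsymm2 : ∀ u v w, m u v w = m u w v)
    (hdist : ∀ u v w, (u = v ∨ v = w ∨ u = w) → m u v w = 0)
    (hsum : ∑ u, ∑ v, ∑ w, m u v w = 1)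
    (hpos : ∀ v, 0 < vertWt m v)
    (g : V → ℝ) :
    ∑ v, vertWt m v * ((∑ u, edgeWt m v u * g u) / vertWt m v) * g v =
      ∑ v, vertWt m v * ∑ u, (edgeWt m v u / vertWt m v) *
        ((∑ w, m v u w * g w) / edgeWt m v u) * g u := by
  have hL : ∀ v, vertWt m v * ((∑ u, edgeWt m v u * g u) / vertWt m v) * g v
      = ∑ u, ∑ w, m v u w * g u * g v := by
    intro v
    rw [mul_div_cancel₀ _ (hpos v).ne', Finset.sum_mul]
    refine Finset.sum_congr rfl fun u _ => ?_
    rw [edgeWt, Finset.sum_mul, Finset.sum_mul]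
  have hR : ∀ v, vertWt m v * ∑ u, (edgeWt m v u / vertWt m v) *
      ((∑ w, m v u w * g w) / edgeWt m v u) * g u
      = ∑ u, ∑ w, m v u w * g w * g u := by
    intro v
    rw [Finset.mul_sum]
    refine Finset.sum_congr rfl fun u _ => ?_
    rw [← Finset.sum_mul]
    by_cases h : edgeWt m v u = 0
    · have hz : ∀ w, m v u w = 0 := fun w =>
        (Finset.sum_eq_zero_iff_of_nonneg (fun w _ => hnn v u w)).1 h w (Finset.mem_univ w)
      simp [h, hz]
    · field_simp
      rw [div_eq_iff (hpos v).ne']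
      ring
  rw [Finset.sum_congr rfl fun v _ => hL v, Finset.sum_congr rfl fun v _ => hR v]
  have cyc : ∀ a b c, m b c a = m a b c := by
    intro a b c
    rw [hsymm1 b c a, hsymm2 c b a, hsymm1 c a b, hsymm2 a c b]
  calc ∑ v, ∑ u, ∑ w, m v u w * g u * g v
      = ∑ v, ∑ w, ∑ u, m v u w * g u * g v :=
        Finset.sum_congr rfl fun v _ => Finset.sum_comm
    _ = ∑ w, ∑ v, ∑ u, m v u w * g u * g v := Finset.sum_comm
    _ = ∑ v, ∑ u, ∑ w, m v u w * g w * g u := by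
        refine Finset.sum_congr rfl fun a _ => Finset.sum_congr rfl fun b _ =>
          Finset.sum_congr rfl fun c _ => ?_
        rw [cyc]
end

section
/- Let G be a group with subgroups K1,…,Kd, and let v be the vertex corresponding to the coset K1 in the coset complex X(G, {K1,…,Kd}). Then the link of v is isomorphic (as a simplicial complex) to the coset complex X(K1, {K1 ∩ K2, …, K1 ∩ Kd}). -/
/-- Faces of the coset complex `X(G, {K1,…,Kd})`: a finite set of cosets (elements of
`Σ i, G ⧸ K i`) is a face iff its members have pairwise distinct types and a common element. -/
def IsCosetFace {G : Type*} [Group G] {d : ℕ} (K : Fin d → Subgroup G)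
    (s : Finset (Σ i : Fin d, G ⧸ K i)) : Prop :=
  (∀ v ∈ s, ∀ w ∈ s, v ≠ w → v.1 ≠ w.1) ∧
    ∃ g : G, ∀ v ∈ s, (QuotientGroup.mk g : G ⧸ K v.1) = v.2

/-- Let `v₀` be the vertex `K 0` (the identity coset of type `0`) of the coset complex
`X(G, {K 0,…,K (d+1)})` (with `d + 2 ≥ 2` subgroups). Then the link of `v₀` is isomorphic, as
a simplicial complex, to the coset complex `X(K 0, {K 0 ∩ K i : i ≠ 0})`: there is an
injection of the vertices of the latter into the vertices of the former carrying the faces of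
`X(K 0, {K 0 ∩ K i : i ≠ 0})` exactly onto the faces of the link of `v₀`. -/
theorem link_of_cosetComplex_iso {G : Type*} [Group G] {d : ℕ}
    (K : Fin (d + 2) → Subgroup G) :
    ∃ e : (Σ j : {j : Fin (d + 2) // j ≠ 0}, K 0 ⧸ (K j.1).subgroupOf (K 0)) ↪
        (Σ i : Fin (d + 2), G ⧸ K i),
      (∀ s : Finset (Σ j : {j : Fin (d + 2) // j ≠ 0}, K 0 ⧸ (K j.1).subgroupOf (K 0)),
        ((∀ w ∈ s, ∀ w' ∈ s, w ≠ w' → w.1 ≠ w'.1) ∧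
            ∃ g : K 0, ∀ w ∈ s,
              (QuotientGroup.mk g : K 0 ⧸ (K w.1.1).subgroupOf (K 0)) = w.2) ↔
          ∃ h : (⟨0, QuotientGroup.mk (1 : G)⟩ : Σ i : Fin (d + 2), G ⧸ K i) ∉ s.map e,
            IsCosetFace K ((s.map e).cons ⟨0, QuotientGroup.mk (1 : G)⟩ h)) ∧
      (∀ t : Finset (Σ i : Fin (d + 2), G ⧸ K i),
        (∃ h : (⟨0, QuotientGroup.mk (1 : G)⟩ : Σ i : Fin (d + 2), G ⧸ K i) ∉ t,
          IsCosetFace K (t.cons ⟨0, QuotientGroup.mk (1 : G)⟩ h)) →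
          ∃ s : Finset (Σ j : {j : Fin (d + 2) // j ≠ 0}, K 0 ⧸ (K j.1).subgroupOf (K 0)),
            s.map e = t) := by
  classical
  -- the quotient map for each type
  let f : ∀ j : Fin (d + 2), (K 0 ⧸ (K j).subgroupOf (K 0)) → G ⧸ K j :=
    fun j => Quotient.map' (fun g : K 0 => (g : G)) (by
      intro a b h
      rw [QuotientGroup.leftRel_apply] at h ⊢
      simpa [Subgroup.mem_subgroupOf] using h)
  have fmk : ∀ (j : Fin (d + 2)) (g : K 0),
      f j (QuotientGroup.mk g) = QuotientGroup.mk (g : G) := fun j g => rfl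
  have finj : ∀ j, Function.Injective (f j) := by
    intro j x y h
    induction x using QuotientGroup.induction_on with
    | H a =>
    induction y using QuotientGroup.induction_on with
    | H b =>
    rw [fmk, fmk, QuotientGroup.eq] at h
    rw [QuotientGroup.eq]
    simpa [Subgroup.mem_subgroupOf] using h
  let efun : (Σ j : {j : Fin (d + 2) // j ≠ 0}, K 0 ⧸ (K j.1).subgroupOf (K 0)) →
      (Σ i : Fin (d + 2), G ⧸ K i) := fun w => ⟨w.1.1, f w.1.1 w.2⟩
  have einj : Function.Injective efun := by
    rintro ⟨⟨j, hj⟩, q⟩ ⟨⟨j', hj'⟩, q'⟩ h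
    obtain ⟨h1, h2⟩ := Sigma.ext_iff.mp h
    change j = j' at h1
    subst h1
    have h2 : f j q = f j q' := eq_of_heq h2
    exact congrArg (fun q => (⟨⟨j, hj⟩, q⟩ : Σ j : {j : Fin (d + 2) // j ≠ 0},
      K 0 ⧸ (K j.1).subgroupOf (K 0))) (finj j h2)
  refine ⟨⟨efun, einj⟩, ?_, ?_⟩
  · intro s
    constructor
    · rintro ⟨hdist, g, hg⟩
      have hnot : (⟨0, QuotientGroup.mk (1 : G)⟩ : Σ i : Fin (d + 2), G ⧸ K i)
          ∉ s.map ⟨efun, einj⟩ := by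
        simp only [Finset.mem_map]
        rintro ⟨w, hw, hew⟩
        exact w.1.2 (congrArg Sigma.fst hew)
      refine ⟨hnot, ?_, (g : G), ?_⟩
      · intro v hv w hw hvw
        rw [Finset.mem_cons] at hv hw
        rcases hv with hv | hv <;> rcases hw with hw | hw
        · exact absurd (hv.trans hw.symm) hvw
        · subst hv
          rw [Finset.mem_map] at hw
          obtain ⟨a, _, rfl⟩ := hw
          exact fun h => a.1.2 h.symm
        · subst hw
          rw [Finset.mem_map] at hv
          obtain ⟨a, _, rfl⟩ := hv
          exact fun h => a.1.2 h
        · rw [Finset.mem_map] at hv hw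
          obtain ⟨a, ha, rfl⟩ := hv
          obtain ⟨b, hb, rfl⟩ := hw
          intro h
          exact hdist a ha b hb (fun hab => hvw (by rw [hab])) (Subtype.ext_iff.mpr h ▸ rfl)
      · intro v hv
        rw [Finset.mem_cons] at hv
        rcases hv with hv | hv
        · subst hv
          rw [QuotientGroup.eq]
          simp only [inv_mem_iff, mul_one]; exact g.2
        · rw [Finset.mem_map] at hv
          obtain ⟨a, ha, rfl⟩ := hv
          show QuotientGroup.mk (g : G) = f a.1.1 a.2
          rw [← hg a ha, fmk]
    · rintro ⟨hnot, hdist, g, hg⟩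
      have hgK : g ∈ K 0 := by
        have := hg ⟨0, QuotientGroup.mk (1 : G)⟩ (Finset.mem_cons_self _ _)
        rw [QuotientGroup.eq] at this
        simp only [inv_mem_iff, mul_one] at this
        exact this
      refine ⟨?_, ⟨g, hgK⟩, ?_⟩
      · intro w hw w' hw' hww
        have h := hdist (efun w) (Finset.mem_cons_of_mem (Finset.mem_map_of_mem _ hw))
          (efun w') (Finset.mem_cons_of_mem (Finset.mem_map_of_mem _ hw'))
          (fun h => hww (einj h))
        exact fun h' => h (congrArg Subtype.val h')
      · intro w hw
        have h := hg (efun w) (Finset.mem_cons_of_mem (Finset.mem_map_of_mem _ hw))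
        apply finj w.1.1
        rw [fmk]
        exact h
  · rintro t ⟨hnot, hdist, g, hg⟩
    have hgK : g ∈ K 0 := by
      have := hg ⟨0, QuotientGroup.mk (1 : G)⟩ (Finset.mem_cons_self _ _)
      rw [QuotientGroup.eq] at this
      simp only [inv_mem_iff, mul_one] at this; exact this
    have hrange : ∀ v ∈ t, v ∈ Set.range efun := by
      intro v hv
      have hv0 : v.1 ≠ 0 := by
        intro h0
        refine hdist ⟨0, QuotientGroup.mk (1 : G)⟩ (Finset.mem_cons_self _ _) v
          (Finset.mem_cons_of_mem hv) ?_ h0.symm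
        rintro rfl
        exact hnot hv
      refine ⟨⟨⟨v.1, hv0⟩, QuotientGroup.mk (⟨g, hgK⟩ : K 0)⟩, ?_⟩
      have h2 : f v.1 (QuotientGroup.mk (⟨g, hgK⟩ : K 0)) = v.2 := by
        rw [fmk]
        exact hg v (Finset.mem_cons_of_mem hv)
      exact Sigma.ext rfl (heq_of_eq h2)
    refine ⟨t.preimage efun (einj.injOn), ?_⟩
    rw [Finset.map_eq_image]
    simp only [Function.Embedding.coeFn_mk]
    rw [Finset.image_preimage]
    exact Finset.filter_true_of_mem fun v hv => hrange v hv
end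

section
/- Let R = F_p[t]/(t^s) with s ≥ 2 and d ≥ 3, and for each i ∈ {1,…,d} let K_i be the subgroup of SL_d(R) generated by all elementary matrices e_{j,j+1}(at+b) with a,b ∈ F_p and j ∈ {1,…,d}\{i} (indices mod d, so j = d gives e_{d,1}). Then for any subset S ⊆ {1,…,d} with |S| ≤ d−2, the group K_S = ⟨e_{j,j+1}(at+b) : a,b ∈ F_p, j ∉ S⟩ is generated by the subgroups {K_S ∩ K_i : i ∈ {1,…,d} \ S}. -/
open Polynomial Matrix

/-- The subgroup `K_S` of `SL_d(F_p[t]/(t^s))` generated by the elementary matrices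
`e_{j,j+1}(at+b)` for `a, b ∈ F_p` and `j ∉ S` (indices taken cyclically mod `d`). -/
noncomputable def KS (p s d : ℕ) [Fact p.Prime] [NeZero d] (S : Set (Fin d)) :
    Subgroup (Matrix.SpecialLinearGroup (Fin d)
      (Polynomial (ZMod p) ⧸ Ideal.span {(X : Polynomial (ZMod p)) ^ s})) :=
  Subgroup.closure
    {M | ∃ a b : ZMod p, ∃ j : Fin d, j ∉ S ∧
      (M : Matrix (Fin d) (Fin d) _) =
        Matrix.transvection j (j + 1)
          (Ideal.Quotient.mk (Ideal.span {(X : Polynomial (ZMod p)) ^ s}) (C a * X + C b))}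

/-- For `R = F_p[t]/(t^s)` (`s ≥ 2`, `d ≥ 3`) and any `S ⊆ {1,…,d}` with `|S| ≤ d − 2`, the
group `K_S = ⟨e_{j,j+1}(at+b) : a,b ∈ F_p, j ∉ S⟩` is generated by the subgroups
`K_S ∩ K_i` for `i ∉ S`. -/
theorem KS_eq_sup_inter {p s d : ℕ} [Fact p.Prime] [NeZero d] (hs : 2 ≤ s) (hd : 3 ≤ d)
    (S : Finset (Fin d)) (hS : S.card ≤ d - 2) :
    KS p s d ↑S = ⨆ i ∈ (↑S : Set (Fin d))ᶜ, (KS p s d ↑S ⊓ KS p s d {i}) := by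
  apply le_antisymm
  · rw [KS, Subgroup.closure_le]
    rintro M ⟨a, b, j, hj, hM⟩
    have hcard : (insert j S).card < Fintype.card (Fin d) := by
      have := Finset.card_insert_le j S
      simp only [Fintype.card_fin]
      omega
    have hpos : 0 < ((insert j S)ᶜ : Finset (Fin d)).card := by
      rw [Finset.card_compl]
      omega
    obtain ⟨i, hi'⟩ := Finset.card_pos.mp hpos
    have hi : i ∉ insert j S := Finset.mem_compl.mp hi'
    have hiS : i ∉ S := fun h => hi (Finset.mem_insert_of_mem h)
    have hij : i ≠ j := fun h => hi (h ▸ Finset.mem_insert_self j S)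
    have hM1 : M ∈ KS p s d ↑S :=
      Subgroup.subset_closure ⟨a, b, j, hj, hM⟩
    have hM2 : M ∈ KS p s d {i} :=
      Subgroup.subset_closure ⟨a, b, j, by simp [Ne.symm hij], hM⟩
    exact Subgroup.mem_iSup_of_mem i (Subgroup.mem_iSup_of_mem (by simpa using hiS)
      ⟨hM1, hM2⟩)
  · exact iSup₂_le fun i _ => inf_le_left
end
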